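/- Let M ≥ 1 be an integer and α ≥ 2 a real number such that the fractional part of M·α is less than 1/2, and set β = ⌊M·α − 1⌋ (so β > M·α − 1.5) and ε = 1/(4(β + 1.5)). Then for all real numbers a, b: (i) if |a − b| ≥ α then |⌊M·a⌋ − ⌊M·b⌋| ≥ M·α − 1 ≥ β; (ii) if |a − b| ≤ 1 then |⌊M·a⌋ − ⌊M·b⌋| ≤ M; and (iii) if |a| ≤ (0.5 + ε)·α then |⌊M·a⌋| ≤ 0.5·β + 2. -/

import Mathlib

/-- Rounding step for the bounded `ℓ∞` Closest-Pair instance: with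
`β = ⌊Mα - 1⌋` (so `β > Mα - 1.5`, using that the fractional part of `Mα` is `< 1/2`) and
`ε = 1/(4(β + 1.5))`: (i) `|a - b| ≥ α` implies `|⌊Ma⌋ - ⌊Mb⌋| ≥ Mα - 1 ≥ β`;
(ii) `|a - b| ≤ 1` implies `|⌊Ma⌋ - ⌊Mb⌋| ≤ M`; and (iii) `|a| ≤ (0.5+ε)α` implies
`|⌊Ma⌋| ≤ 0.5β + 2`. -/
theorem stmt_19 (M : ℕ) (hM : 1 ≤ M) (α : ℝ) (hα : 2 ≤ α)
    (hfrac : Int.fract ((M : ℝ) * α) < 1 / 2)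
    (β : ℤ) (hβ : β = ⌊(M : ℝ) * α - 1⌋)
    (ε : ℝ) (hε : ε = 1 / (4 * ((β : ℝ) + 1.5))) :
    ((M : ℝ) * α - 1.5 < (β : ℝ)) ∧
    ((β : ℝ) ≤ (M : ℝ) * α - 1) ∧
    (∀ a b : ℝ, α ≤ |a - b| →
      (M : ℝ) * α - 1 ≤ |(⌊(M : ℝ) * a⌋ : ℝ) - (⌊(M : ℝ) * b⌋ : ℝ)|) ∧
    (∀ a b : ℝ, |a - b| ≤ 1 →
      |(⌊(M : ℝ) * a⌋ : ℝ) - (⌊(M : ℝ) * b⌋ : ℝ)| ≤ (M : ℝ)) ∧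
    (∀ a : ℝ, |a| ≤ (0.5 + ε) * α → |(⌊(M : ℝ) * a⌋ : ℝ)| ≤ 0.5 * (β : ℝ) + 2) := by
  have hM1 : (1:ℝ) ≤ (M:ℝ) := by exact_mod_cast hM
  have hMα : (2:ℝ) ≤ (M:ℝ) * α := by nlinarith
  have hβeq : β = ⌊(M:ℝ) * α⌋ - 1 := by
    rw [hβ, show (M:ℝ)*α - 1 = (M:ℝ)*α - (1:ℤ) by push_cast; ring, Int.floor_sub_intCast]
  have hfloor : (⌊(M:ℝ)*α⌋ : ℝ) = (M:ℝ)*α - Int.fract ((M:ℝ)*α) := by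
    rw [Int.self_sub_fract]
  have h1 : (M:ℝ)*α - 1.5 < (β:ℝ) := by
    have : (β:ℝ) = (⌊(M:ℝ)*α⌋ : ℝ) - 1 := by rw [hβeq]; push_cast; ring
    rw [this, hfloor]; norm_num; linarith
  have h2 : (β:ℝ) ≤ (M:ℝ)*α - 1 := by
    rw [hβ]; exact Int.floor_le _
  refine ⟨h1, h2, ?_, ?_, ?_⟩
  · have key : ∀ a b : ℝ, α ≤ a - b →
        (M:ℝ)*α - 1 ≤ |(⌊(M:ℝ)*a⌋:ℝ) - (⌊(M:ℝ)*b⌋:ℝ)| := by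
      intro a b hab
      have h3 : (M:ℝ)*α ≤ (M:ℝ)*a - (M:ℝ)*b := by nlinarith
      have fa := Int.sub_one_lt_floor ((M:ℝ)*a)
      have fb := Int.floor_le ((M:ℝ)*b)
      have h4 : (M:ℝ)*α - 1 ≤ (⌊(M:ℝ)*a⌋:ℝ) - (⌊(M:ℝ)*b⌋:ℝ) := by linarith
      exact h4.trans (le_abs_self _)
    intro a b hab
    rcases abs_cases (a - b) with ⟨he, _⟩ | ⟨he, _⟩
    · exact key a b (he ▸ hab)
    · rw [abs_sub_comm]; exact key b a (by linarith)
  · intro a b hab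
    rw [abs_le] at hab
    have fa1 := Int.floor_le ((M:ℝ)*a)
    have fa2 := Int.sub_one_lt_floor ((M:ℝ)*a)
    have fb1 := Int.floor_le ((M:ℝ)*b)
    have fb2 := Int.sub_one_lt_floor ((M:ℝ)*b)
    have hu : (⌊(M:ℝ)*a⌋:ℝ) - (⌊(M:ℝ)*b⌋:ℝ) < (M:ℝ) + 1 := by nlinarith [hab.1, hab.2]
    have hl : -((M:ℝ)+1) < (⌊(M:ℝ)*a⌋:ℝ) - (⌊(M:ℝ)*b⌋:ℝ) := by nlinarith [hab.1, hab.2]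
    have hu' : ⌊(M:ℝ)*a⌋ - ⌊(M:ℝ)*b⌋ < (M:ℤ) + 1 := by exact_mod_cast hu
    have hl' : -((M:ℤ)+1) < ⌊(M:ℝ)*a⌋ - ⌊(M:ℝ)*b⌋ := by exact_mod_cast hl
    rw [abs_le]
    constructor
    · exact_mod_cast (by omega : -(M:ℤ) ≤ ⌊(M:ℝ)*a⌋ - ⌊(M:ℝ)*b⌋)
    · exact_mod_cast (by omega : ⌊(M:ℝ)*a⌋ - ⌊(M:ℝ)*b⌋ ≤ (M:ℤ))
  · intro a ha
    have hβpos : (0:ℝ) < (β:ℝ) + 1.5 := by norm_num at h1 ⊢; linarith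
    have hε' : ε * ((β:ℝ) + 1.5) = 1/4 := by
      rw [hε]; field_simp
    have hεpos : 0 < ε := by rw [hε]; positivity
    have hεMα : ε * ((M:ℝ)*α) < 1/4 := by nlinarith
    have hMabs : (M:ℝ) * |a| ≤ 0.5 * (β:ℝ) + 1 := by nlinarith [abs_nonneg a]
    have hup := le_abs_self ((M:ℝ)*a)
    have hdn := neg_abs_le ((M:ℝ)*a)
    have habs : |(M:ℝ)*a| = (M:ℝ) * |a| := by
      rw [abs_mul, abs_of_nonneg (by linarith : (0:ℝ) ≤ (M:ℝ))]
    rw [habs] at hup hdn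
    have fa1 := Int.floor_le ((M:ℝ)*a)
    have fa2 := Int.sub_one_lt_floor ((M:ℝ)*a)
    rw [abs_le]
    constructor <;> linarith
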